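/- Let n ≥ 2, δ > 0, and 0 < β < δ. Let Ψ be a continuous function on D with M := sup_{(t,x) ∈ D} ( |x| + (|x|²−t²)/4 )^{n−1+δ}·|Ψ(t,x)| < ∞. For ω > 0 define J(ω) := ω^β · ∫_{t ∈ ℝ} ∫_{σ ∈ S^{n−1}} |Ψ( t, √(t²+4ω)·σ )| · (t²+4ω)^{(n−2)/2} dσ dt, where dσ is the standard surface measure on the unit sphere S^{n−1} ⊆ ℝⁿ. Then J(ω) is finite for every ω > 0, and J(ω) → 0 as ω → ∞. (Up to a factor 2, J(ω) is the integral of f^{−1/2+β}·|Ψ| over the timelike hyperboloid {f = ω} ⊆ D with respect to its induced volume form.) -/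

import Mathlib

open Real MeasureTheory Filter
open scoped BigOperators Topology

noncomputable section

/-- Minkowski spacetime `ℝ^{1+n}`, with coordinates `(t, x)`. -/
abbrev Spacetime (n : ℕ) := ℝ × EuclideanSpace ℝ (Fin n)

/-- The exterior `D` of the light cone: `{(t,x) : |t| < |x|}`. -/
def Dom (n : ℕ) : Set (Spacetime n) := {p | |p.1| < ‖p.2‖}

/-- The standard surface measure on the unit sphere `S^{n−1} ⊆ ℝⁿ`. -/
def sphMeasure (n : ℕ) : Measure (Metric.sphere (0 : EuclideanSpace ℝ (Fin n)) 1) :=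
  (volume : Measure (EuclideanSpace ℝ (Fin n))).toSphere

/-- Auxiliary: `(|t|+ν)^{-s}` is integrable on `ℝ` for `ν > 0`, `s > 1`. -/
lemma aux_int (ν s : ℝ) (hν : 0 < ν) (hs : 1 < s) :
    Integrable (fun t : ℝ => (|t| + ν) ^ (-s)) := by
  have h1 : Integrable (fun t : ℝ => (min 1 ν) ^ (-s) * (1 + ‖t‖) ^ (-s)) :=
    (integrable_one_add_norm (by simpa using hs)).const_mul _
  have hmin : 0 < min 1 ν := lt_min one_pos hν
  refine h1.mono' ?_ (ae_of_all _ fun t => ?_)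
  · exact ((continuous_abs.add continuous_const).rpow_const
      (fun t => Or.inl (add_pos_of_nonneg_of_pos (abs_nonneg t) hν).ne')).aestronglyMeasurable
  · rw [Real.norm_of_nonneg (rpow_nonneg (by positivity) _), Real.norm_eq_abs]
    have hle : min 1 ν * (1 + |t|) ≤ |t| + ν := by
      have h1' : min 1 ν ≤ 1 := min_le_left _ _
      have h2 : min 1 ν ≤ ν := min_le_right _ _
      nlinarith [abs_nonneg t]
    calc (|t| + ν) ^ (-s) ≤ (min 1 ν * (1 + |t|)) ^ (-s) :=
          Real.rpow_le_rpow_of_nonpos (by positivity) hle (by linarith)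
      _ = (min 1 ν) ^ (-s) * (1 + |t|) ^ (-s) := Real.mul_rpow hmin.le (by positivity)

/-- Auxiliary pointwise bound on the hyperboloid. -/
lemma aux_ptwise (n : ℕ) (hn : 2 ≤ n) (δ : ℝ) (hδ : 0 < δ) (Ψ : Spacetime n → ℝ) (M : ℝ)
    (hM : ∀ p ∈ Dom n,
      (‖p.2‖ + (‖p.2‖ ^ 2 - p.1 ^ 2) / 4) ^ ((n : ℝ) - 1 + δ) * |Ψ p| ≤ M)
    (ω : ℝ) (hω : 0 < ω) (t : ℝ) (σ : Metric.sphere (0 : EuclideanSpace ℝ (Fin n)) 1) :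
    |Ψ (t, Real.sqrt (t ^ 2 + 4 * ω) • (σ : EuclideanSpace ℝ (Fin n)))| *
      (t ^ 2 + 4 * ω) ^ (((n : ℝ) - 2) / 2) ≤ M * (|t| + ω) ^ (-(1 + δ)) := by
  set r := Real.sqrt (t ^ 2 + 4 * ω) with hrdef
  have h4 : (0:ℝ) ≤ t ^ 2 + 4 * ω := by positivity
  have hr2 : r ^ 2 = t ^ 2 + 4 * ω := Real.sq_sqrt h4
  have hr0 : 0 ≤ r := Real.sqrt_nonneg _
  have hrt : |t| < r := by
    rw [← Real.sqrt_sq_eq_abs]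
    exact Real.sqrt_lt_sqrt (sq_nonneg t) (by linarith)
  have hnorm : ‖r • (σ : EuclideanSpace ℝ (Fin n))‖ = r := by
    rw [norm_smul, Real.norm_eq_abs, abs_of_nonneg hr0]
    simp
  set p : Spacetime n := (t, r • (σ : EuclideanSpace ℝ (Fin n))) with hpdef
  have hp : p ∈ Dom n := by simpa [Dom, hpdef, hnorm] using hrt
  have hMp := hM p hp
  rw [show p.2 = r • (σ : EuclideanSpace ℝ (Fin n)) from rfl,
    show p.1 = t from rfl, hnorm, hr2] at hMp
  have hMp' : (r + ω) ^ ((n : ℝ) - 1 + δ) * |Ψ p| ≤ M := by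
    have : (t ^ 2 + 4 * ω - t ^ 2) / 4 = ω := by ring
    rwa [this] at hMp
  have hrω : (0:ℝ) < r + ω := by linarith
  have hn2 : (0:ℝ) ≤ (n : ℝ) - 2 := by
    have : (2:ℝ) ≤ (n : ℝ) := by exact_mod_cast hn
    linarith
  have hx : (t ^ 2 + 4 * ω) ^ (((n : ℝ) - 2) / 2) = r ^ ((n : ℝ) - 2) := by
    rw [← hr2, ← Real.rpow_natCast r 2, ← Real.rpow_mul hr0]
    congr 1
    push_cast
    ring
  have htω : (0:ℝ) < |t| + ω := by positivity
  have key : (|t| + ω) ^ (1 + δ) * (|Ψ p| * r ^ ((n : ℝ) - 2)) ≤ M := by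
    have e1 : (r + ω) ^ ((n : ℝ) - 1 + δ) = (r + ω) ^ ((n : ℝ) - 2) * (r + ω) ^ (1 + δ) := by
      rw [← Real.rpow_add hrω]; ring_nf
    have e2 : r ^ ((n : ℝ) - 2) ≤ (r + ω) ^ ((n : ℝ) - 2) :=
      Real.rpow_le_rpow hr0 (by linarith) hn2
    have e3 : (|t| + ω) ^ (1 + δ) ≤ (r + ω) ^ (1 + δ) :=
      Real.rpow_le_rpow htω.le (by linarith) (by linarith)
    calc (|t| + ω) ^ (1 + δ) * (|Ψ p| * r ^ ((n : ℝ) - 2))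
        ≤ (r + ω) ^ (1 + δ) * (|Ψ p| * (r + ω) ^ ((n : ℝ) - 2)) := by
          apply mul_le_mul e3 ?_ (by positivity) (by positivity)
          exact mul_le_mul_of_nonneg_left e2 (abs_nonneg _)
      _ = (r + ω) ^ ((n : ℝ) - 1 + δ) * |Ψ p| := by rw [e1]; ring
      _ ≤ M := hMp'
  rw [hx]
  have hb : (0:ℝ) < (|t| + ω) ^ (1 + δ) := Real.rpow_pos_of_pos htω _
  rw [Real.rpow_neg htω.le, ← div_eq_mul_inv, le_div_iff₀ hb]
  calc |Ψ p| * r ^ ((n : ℝ) - 2) * (|t| + ω) ^ (1 + δ)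
      = (|t| + ω) ^ (1 + δ) * (|Ψ p| * r ^ ((n : ℝ) - 2)) := by ring
    _ ≤ M := key

/-- **Lemma 3.10** (boundary limit at null infinity): if `Ψ` is continuous on `D` with
`sup_D (|x| + f)^{n−1+δ}|Ψ| < ∞` where `f = (|x|²−t²)/4`, then for `0 < β < δ` the weighted
integral `J(ω)` of `|Ψ|` over the hyperboloid `{f = ω}` is finite for every `ω > 0` and
tends to `0` as `ω → ∞`. -/
theorem boundary_limit_nullinfinity (n : ℕ) (hn : 2 ≤ n) (δ β : ℝ) (hδ : 0 < δ)
    (hβ0 : 0 < β) (hβδ : β < δ)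
    (Ψ : Spacetime n → ℝ) (hΨ : ContinuousOn Ψ (Dom n))
    (M : ℝ)
    (hM : ∀ p ∈ Dom n,
      (‖p.2‖ + (‖p.2‖ ^ 2 - p.1 ^ 2) / 4) ^ ((n : ℝ) - 1 + δ) * |Ψ p| ≤ M) :
    (∀ ω : ℝ, 0 < ω →
      Integrable
        (fun q : ℝ × Metric.sphere (0 : EuclideanSpace ℝ (Fin n)) 1 =>
          |Ψ (q.1, Real.sqrt (q.1 ^ 2 + 4 * ω) • (q.2 : EuclideanSpace ℝ (Fin n)))| *
            (q.1 ^ 2 + 4 * ω) ^ (((n : ℝ) - 2) / 2))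
        ((volume : Measure ℝ).prod (sphMeasure n))) ∧
    Tendsto
      (fun ω : ℝ => ω ^ β *
        ∫ t : ℝ, ∫ σ : Metric.sphere (0 : EuclideanSpace ℝ (Fin n)) 1,
          |Ψ (t, Real.sqrt (t ^ 2 + 4 * ω) • (σ : EuclideanSpace ℝ (Fin n)))| *
            (t ^ 2 + 4 * ω) ^ (((n : ℝ) - 2) / 2) ∂(sphMeasure n))
      atTop (𝓝 0) := by
  haveI : IsFiniteMeasure (sphMeasure n) := by unfold sphMeasure; infer_instance
  -- M is nonnegative
  have hM0 : 0 ≤ M := by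
    set σ0 : EuclideanSpace ℝ (Fin n) := EuclideanSpace.single ⟨0, by omega⟩ 1 with hσ0def
    have hσ0 : ‖σ0‖ = 1 := by simp [hσ0def]
    have hp0 : ((0:ℝ), σ0) ∈ Dom n := by simp [Dom, hσ0]
    refine le_trans ?_ (hM (0, σ0) hp0)
    have hb : (0:ℝ) ≤ ‖σ0‖ + (‖σ0‖ ^ 2 - (0:ℝ) ^ 2) / 4 := by rw [hσ0]; norm_num
    exact mul_nonneg (Real.rpow_nonneg hb _) (abs_nonneg _)
  -- nonnegativity of the integrand
  have hFnn : ∀ ω : ℝ, 0 ≤ ω → ∀ (t : ℝ) (σ : Metric.sphere (0 : EuclideanSpace ℝ (Fin n)) 1),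
      0 ≤ |Ψ (t, Real.sqrt (t ^ 2 + 4 * ω) • (σ : EuclideanSpace ℝ (Fin n)))| *
        (t ^ 2 + 4 * ω) ^ (((n : ℝ) - 2) / 2) := fun ω hω t σ =>
    mul_nonneg (abs_nonneg _) (Real.rpow_nonneg (by nlinarith [sq_nonneg t]) _)
  -- continuity of the integrand for each ω > 0
  have hcont : ∀ ω : ℝ, 0 < ω →
      Continuous (fun q : ℝ × Metric.sphere (0 : EuclideanSpace ℝ (Fin n)) 1 =>
        |Ψ (q.1, Real.sqrt (q.1 ^ 2 + 4 * ω) • (q.2 : EuclideanSpace ℝ (Fin n)))| *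
          (q.1 ^ 2 + 4 * ω) ^ (((n : ℝ) - 2) / 2)) := by
    intro ω hω
    have hpos : ∀ q : ℝ × Metric.sphere (0 : EuclideanSpace ℝ (Fin n)) 1,
        (0:ℝ) < q.1 ^ 2 + 4 * ω := fun q => by nlinarith [sq_nonneg q.1]
    have hbase : Continuous (fun q : ℝ × Metric.sphere (0 : EuclideanSpace ℝ (Fin n)) 1 =>
        q.1 ^ 2 + 4 * ω) := by fun_prop
    have hsqrt : Continuous (fun q : ℝ × Metric.sphere (0 : EuclideanSpace ℝ (Fin n)) 1 =>
        Real.sqrt (q.1 ^ 2 + 4 * ω)) := Real.continuous_sqrt.comp hbase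
    have hφ : Continuous (fun q : ℝ × Metric.sphere (0 : EuclideanSpace ℝ (Fin n)) 1 =>
        ((q.1, Real.sqrt (q.1 ^ 2 + 4 * ω) • (q.2 : EuclideanSpace ℝ (Fin n))) : Spacetime n)) :=
      continuous_fst.prodMk (hsqrt.smul (continuous_subtype_val.comp continuous_snd))
    have hmem : ∀ q : ℝ × Metric.sphere (0 : EuclideanSpace ℝ (Fin n)) 1,
        ((q.1, Real.sqrt (q.1 ^ 2 + 4 * ω) • (q.2 : EuclideanSpace ℝ (Fin n))) : Spacetime n)
          ∈ Dom n := by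
      intro q
      have h1 : |q.1| < Real.sqrt (q.1 ^ 2 + 4 * ω) := by
        rw [← Real.sqrt_sq_eq_abs]
        exact Real.sqrt_lt_sqrt (sq_nonneg _) (by nlinarith)
      simpa [Dom, norm_smul, Real.norm_eq_abs,
        abs_of_nonneg (Real.sqrt_nonneg _)] using h1
    exact ((hΨ.comp_continuous hφ hmem).abs).mul
      (hbase.rpow_const (fun q => Or.inl (hpos q).ne'))
  -- integrability
  have hInt : ∀ ω : ℝ, 0 < ω →
      Integrable
        (fun q : ℝ × Metric.sphere (0 : EuclideanSpace ℝ (Fin n)) 1 =>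
          |Ψ (q.1, Real.sqrt (q.1 ^ 2 + 4 * ω) • (q.2 : EuclideanSpace ℝ (Fin n)))| *
            (q.1 ^ 2 + 4 * ω) ^ (((n : ℝ) - 2) / 2))
        ((volume : Measure ℝ).prod (sphMeasure n)) := by
    intro ω hω
    have hg : Integrable (fun t : ℝ => M * (|t| + ω) ^ (-(1 + δ))) :=
      (aux_int ω (1 + δ) hω (by linarith)).const_mul M
    have hG : Integrable
        (fun q : ℝ × Metric.sphere (0 : EuclideanSpace ℝ (Fin n)) 1 =>
          M * (|q.1| + ω) ^ (-(1 + δ))) ((volume : Measure ℝ).prod (sphMeasure n)) := by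
      have h1 : Integrable (fun _ : Metric.sphere (0 : EuclideanSpace ℝ (Fin n)) 1 => (1:ℝ))
        (sphMeasure n) := integrable_const 1
      simpa using hg.mul_prod h1
    refine hG.mono' (hcont ω hω).aestronglyMeasurable (ae_of_all _ fun q => ?_)
    rw [Real.norm_of_nonneg (hFnn ω hω.le q.1 q.2)]
    exact aux_ptwise n hn δ hδ Ψ M hM ω hω q.1 q.2
  refine ⟨hInt, ?_⟩
  -- the limit
  set ε := (δ - β) / 2 with hεdef
  set γ := (δ + β) / 2 with hγdef
  have hε0 : 0 < ε := by rw [hεdef]; linarith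
  have hγ0 : 0 < γ := by rw [hγdef]; linarith
  have hh : Integrable (fun t : ℝ => (|t| + 1) ^ (-(1 + ε))) :=
    aux_int 1 (1 + ε) one_pos (by linarith)
  set S := ((sphMeasure n) Set.univ).toReal with hSdef
  have hS0 : 0 ≤ S := ENNReal.toReal_nonneg
  set Ih := ∫ t : ℝ, (|t| + 1) ^ (-(1 + ε)) with hIhdef
  have hIh0 : 0 ≤ Ih :=
    integral_nonneg fun t => Real.rpow_nonneg (by positivity) _
  set C := S * M * Ih with hCdef
  have hbound : ∀ ω : ℝ, 1 ≤ ω →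
      ω ^ β * (∫ t : ℝ, ∫ σ : Metric.sphere (0 : EuclideanSpace ℝ (Fin n)) 1,
        |Ψ (t, Real.sqrt (t ^ 2 + 4 * ω) • (σ : EuclideanSpace ℝ (Fin n)))| *
          (t ^ 2 + 4 * ω) ^ (((n : ℝ) - 2) / 2) ∂(sphMeasure n)) ≤ C * ω ^ (-ε) := by
    intro ω hω1
    have hω : 0 < ω := lt_of_lt_of_le one_pos hω1
    have hgt : ∀ t : ℝ, M * (|t| + ω) ^ (-(1 + δ)) ≤
        (M * ω ^ (-γ)) * (|t| + 1) ^ (-(1 + ε)) := by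
      intro t
      have hb1 : (0:ℝ) < |t| + ω := by positivity
      have hb2 : (0:ℝ) < |t| + 1 := by positivity
      have h1 : (|t| + 1) ^ (1 + ε) * ω ^ γ ≤ (|t| + ω) ^ (1 + δ) := by
        have he : (1:ℝ) + δ = (1 + ε) + γ := by rw [hεdef, hγdef]; ring
        rw [he, Real.rpow_add hb1]
        exact mul_le_mul (Real.rpow_le_rpow hb2.le (by linarith) (by linarith))
          (Real.rpow_le_rpow hω.le (le_add_of_nonneg_left (abs_nonneg t)) hγ0.le)
          (Real.rpow_nonneg hω.le _) (Real.rpow_nonneg hb1.le _)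
      have h2 : (|t| + ω) ^ (-(1 + δ)) ≤ ((|t| + 1) ^ (1 + ε) * ω ^ γ)⁻¹ := by
        rw [Real.rpow_neg hb1.le]
        exact inv_anti₀ (by positivity) h1
      calc M * (|t| + ω) ^ (-(1 + δ)) ≤ M * ((|t| + 1) ^ (1 + ε) * ω ^ γ)⁻¹ :=
            mul_le_mul_of_nonneg_left h2 hM0
        _ = (M * ω ^ (-γ)) * (|t| + 1) ^ (-(1 + ε)) := by
            rw [Real.rpow_neg hω.le, Real.rpow_neg hb2.le, mul_inv]; ring
    have hinner : ∀ t : ℝ,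
        (∫ σ : Metric.sphere (0 : EuclideanSpace ℝ (Fin n)) 1,
          |Ψ (t, Real.sqrt (t ^ 2 + 4 * ω) • (σ : EuclideanSpace ℝ (Fin n)))| *
            (t ^ 2 + 4 * ω) ^ (((n : ℝ) - 2) / 2) ∂(sphMeasure n)) ≤
          S * (M * (|t| + ω) ^ (-(1 + δ))) := by
      intro t
      have h := integral_mono_of_nonneg
        (ae_of_all _ (fun σ => hFnn ω hω.le t σ))
        (integrable_const (μ := sphMeasure n) (M * (|t| + ω) ^ (-(1 + δ))))
        (ae_of_all _ fun σ => aux_ptwise n hn δ hδ Ψ M hM ω hω t σ)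
      refine le_trans h (le_of_eq ?_)
      rw [integral_const, smul_eq_mul]; rfl
    have houter :
        (∫ t : ℝ, ∫ σ : Metric.sphere (0 : EuclideanSpace ℝ (Fin n)) 1,
          |Ψ (t, Real.sqrt (t ^ 2 + 4 * ω) • (σ : EuclideanSpace ℝ (Fin n)))| *
            (t ^ 2 + 4 * ω) ^ (((n : ℝ) - 2) / 2) ∂(sphMeasure n)) ≤
          ∫ t : ℝ, S * (M * (|t| + ω) ^ (-(1 + δ))) :=
      integral_mono_of_nonneg
        (ae_of_all _ fun t => integral_nonneg fun σ => hFnn ω hω.le t σ)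
        (((aux_int ω (1 + δ) hω (by linarith)).const_mul M).const_mul S)
        (ae_of_all _ hinner)
    have houter2 :
        (∫ t : ℝ, S * (M * (|t| + ω) ^ (-(1 + δ)))) ≤
          ∫ t : ℝ, S * ((M * ω ^ (-γ)) * (|t| + 1) ^ (-(1 + ε))) :=
      integral_mono_of_nonneg
        (ae_of_all _ fun t => mul_nonneg hS0
          (mul_nonneg hM0 (Real.rpow_nonneg (by positivity) _)))
        (((hh.const_mul _).const_mul S))
        (ae_of_all _ fun t => mul_le_mul_of_nonneg_left (hgt t) hS0)
    have hval : (∫ t : ℝ, S * ((M * ω ^ (-γ)) * (|t| + 1) ^ (-(1 + ε)))) =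
        S * (M * ω ^ (-γ)) * Ih := by
      simp_rw [← mul_assoc]
      rw [MeasureTheory.integral_const_mul, hIhdef]
    have hstep : ω ^ β * (∫ t : ℝ, ∫ σ : Metric.sphere (0 : EuclideanSpace ℝ (Fin n)) 1,
          |Ψ (t, Real.sqrt (t ^ 2 + 4 * ω) • (σ : EuclideanSpace ℝ (Fin n)))| *
            (t ^ 2 + 4 * ω) ^ (((n : ℝ) - 2) / 2) ∂(sphMeasure n)) ≤
        ω ^ β * (S * (M * ω ^ (-γ)) * Ih) :=
      mul_le_mul_of_nonneg_left (le_trans houter (houter2.trans_eq hval))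
        (Real.rpow_nonneg hω.le β)
    refine le_trans hstep (le_of_eq ?_)
    have hpow : ω ^ β * ω ^ (-γ) = ω ^ (-ε) := by
      rw [← Real.rpow_add hω]
      congr 1
      rw [hεdef, hγdef]; ring
    rw [hCdef, ← hpow]; ring
  have hg0 : Tendsto (fun ω : ℝ => C * ω ^ (-ε)) atTop (𝓝 0) := by
    simpa using (tendsto_rpow_neg_atTop hε0).const_mul C
  refine squeeze_zero' ?_ ?_ hg0
  · filter_upwards [eventually_ge_atTop (0:ℝ)] with ω hω
    exact mul_nonneg (Real.rpow_nonneg hω _)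
      (integral_nonneg fun t => integral_nonneg fun σ => hFnn ω hω t σ)
  · filter_upwards [eventually_ge_atTop (1:ℝ)] with ω hω using hbound ω hω
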